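/- Let Q, Q' be elements of the shape-regular parametric Bézier mesh that are neighbors, i.e. dist(Q,Q') ≤ C·h_Q with C independent of the mesh size. Then there exists a constant C' > 0, depending only on the polynomial degree k, the shape regularity of the mesh, and the distance between Q and Q', such that for every tensor-product polynomial p ∈ Q_k(R^d), ‖p‖_{L^∞(Q)} ≤ C' ‖p‖_{L^∞(Q')}. -/

import Mathlib

open Set Metric MeasureTheory

noncomputable section

/-- Euclidean space `ℝᵈ`. -/
abbrev Euc (d : ℕ) : Type := EuclideanSpace ℝ (Fin d)

/-- The open axis-aligned box with lower corner `a` and upper corner `b`. -/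
def box {d : ℕ} (a b : Fin d → ℝ) : Set (Euc d) :=
  {x : Euc d | ∀ i, x i ∈ Ioo (a i) (b i)}

/-- Tensor-product polynomial functions of coordinate degree at most `k`
(the space `Q_k(ℝᵈ)`). -/
def IsQPoly {d : ℕ} (k : ℕ) (f : Euc d → ℝ) : Prop :=
  ∃ P : MvPolynomial (Fin d) ℝ, (∀ i, P.degreeOf i ≤ k) ∧
    ∀ x : Euc d, f x = MvPolynomial.eval (fun i => x i) P

lemma coord_dist_le {d : ℕ} (p q : Euc d) (i : Fin d) : |p i - q i| ≤ dist p q := by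
  rw [EuclideanSpace.dist_eq]
  have h1 : |p i - q i| = Real.sqrt ((p i - q i)^2) := (Real.sqrt_sq_eq_abs _).symm
  rw [h1]
  apply Real.sqrt_le_sqrt
  have := Finset.single_le_sum (f := fun j => dist (p j) (q j) ^ 2)
    (fun j _ => sq_nonneg _) (Finset.mem_univ i)
  simpa [Real.dist_eq, sq_abs] using this

lemma isBounded_box {d : ℕ} (a b : Fin d → ℝ) : Bornology.IsBounded (box a b) := by
  rw [isBounded_iff_forall_norm_le]
  refine ⟨Real.sqrt (∑ i : Fin d, (|a i| + |b i|)^2), fun x hx => ?_⟩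
  rw [EuclideanSpace.norm_eq]
  apply Real.sqrt_le_sqrt
  apply Finset.sum_le_sum
  intro i _
  have h := hx i
  have h1 : |x i| ≤ |a i| + |b i| := by
    rw [abs_le]
    constructor
    · nlinarith [h.1, abs_nonneg (a i), abs_nonneg (b i), neg_abs_le (a i)]
    · nlinarith [h.2, abs_nonneg (a i), abs_nonneg (b i), le_abs_self (b i)]
  calc ‖x i‖^2 = |x i|^2 := by rw [Real.norm_eq_abs]
    _ ≤ (|a i| + |b i|)^2 := by nlinarith [abs_nonneg (x i)]

lemma qpoly_continuous {d k : ℕ} {f : Euc d → ℝ} (hf : IsQPoly k f) : Continuous f := by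
  obtain ⟨P, -, hP⟩ := hf
  have : f = (fun x : Fin d → ℝ => MvPolynomial.eval x P) ∘ (fun x : Euc d => fun i => x i) := by
    funext x; exact hP x
  rw [this]
  exact Continuous.comp (MvPolynomial.continuous_eval P)
    (continuous_pi (fun i => (EuclideanSpace.proj i : Euc d →L[ℝ] ℝ).continuous))

lemma box_nonempty {d : ℕ} {a b : Fin d → ℝ} (hab : ∀ i, a i < b i) : (box a b).Nonempty := by
  refine ⟨WithLp.toLp 2 (fun i => (a i + b i)/2 : Fin d → ℝ), fun i => ?_⟩
  constructor <;> [skip; skip] <;> · simp only []; linarith [hab i]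

lemma bddAbove_abs_image {d k : ℕ} {f : Euc d → ℝ} (hf : IsQPoly k f) (a b : Fin d → ℝ) :
    BddAbove ((fun y => |f y|) '' box a b) := by
  have hcont : ContinuousOn (fun y => |f y|) (closure (box a b)) :=
    ((qpoly_continuous hf).abs).continuousOn
  have hcomp : IsCompact (closure (box a b)) :=
    Metric.isCompact_of_isClosed_isBounded isClosed_closure (isBounded_box a b).closure
  obtain ⟨C, hC⟩ := hcomp.exists_bound_of_continuousOn hcont
  refine ⟨C, fun y hy => ?_⟩
  obtain ⟨z, hz, rfl⟩ := hy
  have := hC z (subset_closure hz)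
  simpa [Real.norm_eq_abs] using this

lemma le_sSup_box {d k : ℕ} {f : Euc d → ℝ} (hf : IsQPoly k f) {a b : Fin d → ℝ}
    {x : Euc d} (hx : x ∈ box a b) :
    |f x| ≤ sSup ((fun y => |f y|) '' box a b) :=
  le_csSup (bddAbove_abs_image hf a b) ⟨x, hx, rfl⟩

lemma sSup_box_nonneg {d k : ℕ} {f : Euc d → ℝ} (hf : IsQPoly k f) {a b : Fin d → ℝ}
    (hab : ∀ i, a i < b i) : 0 ≤ sSup ((fun y => |f y|) '' box a b) := by
  obtain ⟨x, hx⟩ := box_nonempty hab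
  exact (abs_nonneg _).trans (le_sSup_box hf hx)

/-- Interpolation nodes inside `(u,v)`. -/
def node (k : ℕ) (u v : ℝ) (j : Fin (k+1)) : ℝ :=
  u + ((j : ℕ) + 1) * (v - u) / (k + 2)

lemma node_mem {k : ℕ} {u v : ℝ} (huv : u < v) (j : Fin (k+1)) :
    node k u v j ∈ Ioo u v := by
  have hL : 0 < v - u := by linarith
  have hk2 : (0:ℝ) < (k:ℝ) + 2 := by positivity
  have hj1 : (0:ℝ) < (j:ℕ) + 1 := by positivity
  have hjk : ((j:ℕ) : ℝ) + 1 < (k:ℝ) + 2 := by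
    have := j.isLt
    have : ((j:ℕ) : ℝ) < (k:ℝ) + 1 := by exact_mod_cast this
    linarith
  constructor
  · simp only [node]
    have : 0 < ((j:ℕ) + 1) * (v - u) / (k + 2) := by positivity
    linarith
  · simp only [node]
    have h3 : ((j:ℕ) + 1) * (v - u) / (k + 2) < v - u := by
      rw [div_lt_iff₀ hk2]; nlinarith
    linarith

lemma node_sub {k : ℕ} (u v : ℝ) (i j : Fin (k+1)) :
    node k u v j - node k u v i = (((j:ℕ):ℝ) - ((i:ℕ):ℝ)) * (v - u) / (k + 2) := by
  simp only [node]
  ring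

lemma node_injective {k : ℕ} {u v : ℝ} (huv : u < v) :
    Function.Injective (node k u v) := by
  intro i j h
  have hL : 0 < v - u := by linarith
  have hk2 : (0:ℝ) < (k:ℝ) + 2 := by positivity
  have h2 : node k u v j - node k u v i = 0 := by rw [h]; ring
  rw [node_sub] at h2
  have : (((j:ℕ):ℝ) - ((i:ℕ):ℝ)) = 0 := by
    rw [div_eq_zero_iff] at h2
    rcases h2 with h2 | h2
    · rcases mul_eq_zero.mp h2 with h | h
      · exact h
      · exfalso; linarith
    · exfalso; linarith
  have : ((j:ℕ):ℝ) = ((i:ℕ):ℝ) := by linarith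
  have : (j:ℕ) = (i:ℕ) := by exact_mod_cast this
  exact (Fin.ext this).symm

lemma node_gap {k : ℕ} {u v : ℝ} (huv : u < v) {i j : Fin (k+1)} (hij : i ≠ j) :
    (v - u) / (k + 2) ≤ |node k u v j - node k u v i| := by
  have hL : 0 < v - u := by linarith
  have hk2 : (0:ℝ) < (k:ℝ) + 2 := by positivity
  rw [node_sub, abs_div, abs_mul]
  rw [abs_of_pos hk2, abs_of_pos hL]
  have h1 : (1:ℝ) ≤ |((j:ℕ):ℝ) - ((i:ℕ):ℝ)| := by
    have hne : (j:ℕ) ≠ (i:ℕ) := fun h => hij (Fin.ext h).symm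
    have : ((j:ℕ):ℝ) - ((i:ℕ):ℝ) ≠ 0 := by
      intro h
      exact hne (by exact_mod_cast sub_eq_zero.mp h)
    have h2 : (1:ℕ) ≤ Int.natAbs ((j:ℕ) - (i:ℕ) : ℤ) := by
      omega
    calc (1:ℝ) ≤ (Int.natAbs ((j:ℕ) - (i:ℕ) : ℤ) : ℝ) := by exact_mod_cast h2
      _ = |((j:ℕ):ℝ) - ((i:ℕ):ℝ)| := by
          rw [Nat.cast_natAbs]
          push_cast
          ring_nf
  rw [div_le_div_iff₀ hk2 hk2]
  nlinarith [mul_le_mul_of_nonneg_right (mul_le_mul_of_nonneg_right h1 hL.le) hk2.le]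

open Polynomial in
/-- One-dimensional growth bound via Lagrange interpolation. -/
lemma oneD (k : ℕ) (M : ℝ) (hM : 0 ≤ M) (u v : ℝ) (huv : u < v)
    (q : ℝ[X]) (hq : q.natDegree ≤ k) (x : ℝ)
    (hx1 : u - M * (v - u) ≤ x) (hx2 : x ≤ v + M * (v - u)) :
    |q.eval x| ≤ ((M + 1) * (k + 2))^k * ∑ j : Fin (k+1), |q.eval (node k u v j)| := by
  have hL : 0 < v - u := by linarith
  have hk2 : (0:ℝ) < (k:ℝ) + 2 := by positivity
  set t := node k u v with ht
  have hinj : Set.InjOn t (Finset.univ : Finset (Fin (k+1))) :=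
    (node_injective huv).injOn
  have hdeg : q.degree < (Finset.univ : Finset (Fin (k+1))).card := by
    rw [Finset.card_univ, Fintype.card_fin]
    calc q.degree ≤ (q.natDegree : WithBot ℕ) := degree_le_natDegree
      _ < ((k+1 : ℕ) : WithBot ℕ) := by exact_mod_cast Nat.lt_succ_of_le hq
  have hrep := Lagrange.eq_interpolate hinj hdeg
  -- bound each Lagrange basis polynomial at x
  have hbasis : ∀ j : Fin (k+1),
      |Polynomial.eval x (Lagrange.basis Finset.univ t j)| ≤ ((M + 1) * (k + 2))^k := by
    intro j
    rw [Lagrange.basis, Polynomial.eval_prod]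
    rw [Finset.abs_prod]
    have hcard : (Finset.univ.erase j).card = k := by
      rw [Finset.card_erase_of_mem (Finset.mem_univ j), Finset.card_univ, Fintype.card_fin]
      omega
    calc ∏ i ∈ Finset.univ.erase j, |Polynomial.eval x (Lagrange.basisDivisor (t j) (t i))|
        ≤ ∏ _i ∈ Finset.univ.erase j, ((M + 1) * (k + 2)) := by
          apply Finset.prod_le_prod (fun i _ => abs_nonneg _)
          intro i hi
          have hij : i ≠ j := (Finset.mem_erase.mp hi).1
          rw [Lagrange.basisDivisor]
          simp only [Polynomial.eval_mul, Polynomial.eval_C, Polynomial.eval_sub,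
            Polynomial.eval_X]
          rw [abs_mul, abs_inv]
          have hgap : (v - u) / (k + 2) ≤ |t j - t i| := node_gap huv hij
          have hgap0 : 0 < |t j - t i| := lt_of_lt_of_le (by positivity) hgap
          have hxt : |x - t i| ≤ (M + 1) * (v - u) := by
            have hti := node_mem huv i
            rw [abs_le]
            constructor
            · have := hti.2.le
              simp only [ht] at this ⊢
              nlinarith
            · have := hti.1.le
              simp only [ht] at this ⊢
              nlinarith
          calc |t j - t i|⁻¹ * |x - t i| ≤ ((v - u) / (k + 2))⁻¹ * ((M+1) * (v-u)) := by
                apply mul_le_mul (by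
                  apply inv_anti₀ (by positivity) hgap) hxt (abs_nonneg _) (by positivity)
            _ = (M + 1) * (k + 2) := by field_simp
      _ = ((M + 1) * (k + 2))^k := by rw [Finset.prod_const, hcard]
  -- expand q at x via the interpolation formula
  have hx : q.eval x = ∑ j : Fin (k+1), q.eval (t j) *
      Polynomial.eval x (Lagrange.basis Finset.univ t j) := by
    conv_lhs => rw [hrep]
    rw [Lagrange.interpolate_apply, Polynomial.eval_finset_sum]
    apply Finset.sum_congr rfl
    intro j _
    rw [Polynomial.eval_mul, Polynomial.eval_C]
  rw [hx]
  calc |∑ j : Fin (k+1), q.eval (t j) * Polynomial.eval x (Lagrange.basis Finset.univ t j)|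
      ≤ ∑ j : Fin (k+1), |q.eval (t j) * Polynomial.eval x (Lagrange.basis Finset.univ t j)| :=
        Finset.abs_sum_le_sum_abs _ _
    _ ≤ ∑ j : Fin (k+1), ((M + 1) * (k + 2))^k * |q.eval (t j)| := by
        apply Finset.sum_le_sum
        intro j _
        rw [abs_mul, mul_comm]
        exact mul_le_mul_of_nonneg_right (hbasis j) (abs_nonneg _)
    _ = ((M + 1) * (k + 2))^k * ∑ j : Fin (k+1), |q.eval (t j)| := by
        rw [Finset.mul_sum]

/-- Evaluating the "slice" polynomial obtained by substituting the first variable. -/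
lemma slice_eval {d : ℕ} (P : MvPolynomial (Fin (d+1)) ℝ) (t : ℝ) (z : Fin d → ℝ) :
    MvPolynomial.eval z (Polynomial.eval (MvPolynomial.C t) (MvPolynomial.finSuccEquiv ℝ d P)) =
      Polynomial.eval t ((MvPolynomial.finSuccEquiv ℝ d P).map (MvPolynomial.eval z)) := by
  set Q := MvPolynomial.finSuccEquiv ℝ d P with hQ
  have h1 : Polynomial.eval (MvPolynomial.C t) Q
      = Q.eval₂ (RingHom.id _) (MvPolynomial.C t) := rfl
  rw [h1, Polynomial.hom_eval₂, Polynomial.eval_map]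
  simp

lemma slice_degreeOf {d k : ℕ} (P : MvPolynomial (Fin (d+1)) ℝ)
    (hP : ∀ i, MvPolynomial.degreeOf i P ≤ k) (t : ℝ) (i : Fin d) :
    MvPolynomial.degreeOf i
      (Polynomial.eval (MvPolynomial.C t) (MvPolynomial.finSuccEquiv ℝ d P)) ≤ k := by
  set Q := MvPolynomial.finSuccEquiv ℝ d P with hQ
  rw [Polynomial.eval_eq_sum_range]
  refine le_trans (MvPolynomial.degreeOf_sum_le _ _ _) ?_
  apply Finset.sup_le
  intro m _
  refine le_trans (MvPolynomial.degreeOf_mul_le _ _ _) ?_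
  have h2 : MvPolynomial.degreeOf i ((MvPolynomial.C t)^m : MvPolynomial (Fin d) ℝ) = 0 := by
    rw [← map_pow, MvPolynomial.degreeOf_C]
  rw [h2, add_zero]
  exact le_trans (MvPolynomial.degreeOf_coeff_finSuccEquiv P i m) (hP i.succ)

/-- The core growth estimate for tensor-product polynomials, by induction on dimension. -/
lemma core (k : ℕ) (M : ℝ) (hM : 0 ≤ M) :
    ∀ (d : ℕ) (a b : Fin d → ℝ), (∀ i, a i < b i) →
    ∀ f : Euc d → ℝ, IsQPoly k f →
    ∀ x : Euc d, (∀ i, a i - M * (b i - a i) ≤ x i ∧ x i ≤ b i + M * (b i - a i)) →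
    |f x| ≤ (((k:ℝ)+1) * ((M+1)*((k:ℝ)+2))^k)^d * sSup ((fun y => |f y|) '' box a b) := by
  intro d
  induction d with
  | zero =>
    intro a b hab f hf x _
    have hx : x ∈ box a b := fun i => i.elim0
    have := le_sSup_box hf hx
    simpa using this
  | succ d ih =>
    intro a b hab f hf x hx
    obtain ⟨P, hPdeg, hPev⟩ := hf
    set Q := MvPolynomial.finSuccEquiv ℝ d P with hQdef
    set B : ℝ := ((M+1)*((k:ℝ)+2))^k with hBdef
    set Cst : ℝ := ((k:ℝ)+1) * B with hCdef
    have hB0 : 0 < B := by positivity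
    have hC0 : 0 < Cst := by positivity
    set z : Fin d → ℝ := fun i => x i.succ with hzdef
    set q : Polynomial ℝ := Q.map (MvPolynomial.eval z) with hqdef
    have hqdeg : q.natDegree ≤ k := by
      refine le_trans Polynomial.natDegree_map_le ?_
      rw [hQdef, MvPolynomial.natDegree_finSuccEquiv]
      exact hPdeg 0
    -- f x as a 1-variable polynomial evaluation
    have hfx : f x = Polynomial.eval (x 0) q := by
      rw [hPev]
      have hcons : (fun i => x i) = Fin.cons (x 0) z := by
        funext i
        refine Fin.cases rfl (fun j => ?_) i
        simp [hzdef, Fin.cons_succ]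
      rw [hcons, MvPolynomial.eval_eq_eval_mv_eval']
    -- the slice polynomials
    set R : Fin (k+1) → MvPolynomial (Fin d) ℝ :=
      fun j => Polynomial.eval (MvPolynomial.C (node k (a 0) (b 0) j)) Q with hRdef
    set g : Fin (k+1) → Euc d → ℝ :=
      fun j y => MvPolynomial.eval (fun i => y i) (R j) with hgdef
    have hgQ : ∀ j, IsQPoly k (g j) := fun j =>
      ⟨R j, fun i => slice_degreeOf P hPdeg _ i, fun y => rfl⟩
    have hqnode : ∀ j : Fin (k+1), Polynomial.eval (node k (a 0) (b 0) j) q = g j (WithLp.toLp 2 z) := by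
      intro j
      rw [hgdef]
      simp only [hRdef]
      rw [slice_eval P (node k (a 0) (b 0) j) z]
    -- 1D estimate in the first variable
    have h1 : |f x| ≤ B * ∑ j : Fin (k+1), |g j (WithLp.toLp 2 z)| := by
      rw [hfx]
      have := oneD k M hM (a 0) (b 0) (hab 0) q hqdeg (x 0) (hx 0).1 (hx 0).2
      simpa [hqnode] using this
    -- the supremum over the whole box
    set S : ℝ := sSup ((fun y => |f y|) '' box a b) with hSdef
    have hS0 : 0 ≤ S := sSup_box_nonneg ⟨P, hPdeg, hPev⟩ hab
    -- apply the inductive hypothesis on each slice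
    have h2 : ∀ j : Fin (k+1), |g j (WithLp.toLp 2 z)| ≤ Cst^d * S := by
      intro j
      have hab' : ∀ i : Fin d, (a ∘ Fin.succ) i < (b ∘ Fin.succ) i := fun i => hab i.succ
      have hz' : ∀ i : Fin d,
          (a ∘ Fin.succ) i - M * ((b ∘ Fin.succ) i - (a ∘ Fin.succ) i) ≤ z i ∧
          z i ≤ (b ∘ Fin.succ) i + M * ((b ∘ Fin.succ) i - (a ∘ Fin.succ) i) := by
        intro i
        exact hx i.succ
      have hih := ih (a ∘ Fin.succ) (b ∘ Fin.succ) hab' (g j) (hgQ j) (WithLp.toLp 2 z) hz'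
      refine hih.trans (mul_le_mul_of_nonneg_left ?_ (by positivity))
      -- sSup over sub-box is at most S
      apply Real.sSup_le
      · rintro w ⟨z0, hz0, rfl⟩
        set y : Euc (d+1) := WithLp.toLp 2 (Fin.cons (node k (a 0) (b 0) j) (fun i => z0 i) : Fin (d+1) → ℝ) with hydef
        have hy : y ∈ box a b := by
          intro i
          refine Fin.cases ?_ (fun i2 => ?_) i
          · simpa [hydef, Fin.cons_zero] using node_mem (hab 0) j
          · simpa [hydef, Fin.cons_succ] using hz0 i2
        have hval : g j z0 = f y := by
          rw [hPev]
          have hcons : (fun i => y i) = Fin.cons (node k (a 0) (b 0) j) (fun i => z0 i) := by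
            funext i
            refine Fin.cases ?_ (fun i2 => ?_) i
            · simp [hydef, Fin.cons_zero]
            · simp [hydef, Fin.cons_succ]
          rw [hcons, MvPolynomial.eval_eq_eval_mv_eval']
          rw [hgdef]
          simp only [hRdef]
          rw [slice_eval P (node k (a 0) (b 0) j) (fun i => z0 i)]
        show |g j z0| ≤ S
        rw [hval]
        exact le_sSup_box ⟨P, hPdeg, hPev⟩ hy
      · exact hS0
    -- combine
    calc |f x| ≤ B * ∑ j : Fin (k+1), |g j (WithLp.toLp 2 z)| := h1
      _ ≤ B * ∑ _j : Fin (k+1), Cst^d * S := by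
          gcongr with j _
          exact h2 j
      _ = B * (((k:ℝ)+1) * (Cst^d * S)) := by
          rw [Finset.sum_const, Finset.card_univ, Fintype.card_fin, nsmul_eq_mul]
          push_cast
          ring
      _ = Cst^(d+1) * S := by
          rw [hCdef, pow_succ]
          ring


/-- Lemma A.3.  Let `Q, Q'` be elements of a shape-regular
parametric Bézier mesh (axis-aligned boxes whose edges are comparable to their
diameters with constant `ρ`, the mesh being locally quasi-uniform with constant
`cq`) that are neighbors, i.e. `dist(Q,Q') ≤ c ⋅ h_Q`.  Then there exists a
constant `C > 0`, depending only on the polynomial degree `k`, the shape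
regularity of the mesh and on the distance between `Q` and `Q'` (i.e. on
`k, ρ, c, cq` and `d`), such that `‖p‖_{L^∞(Q)} ≤ C ‖p‖_{L^∞(Q')}` for every
tensor-product polynomial `p ∈ Q_k(ℝᵈ)`. -/
theorem poly_sup_neighbor_bound (d k : ℕ) (ρ c cq : ℝ)
    (hρ : 0 < ρ) (hc : 0 < c) (hcq : 0 < cq) :
    ∃ C > (0 : ℝ), ∀ a b a' b' : Fin d → ℝ,
      (∀ i, a i < b i) → (∀ i, a' i < b' i) →
      -- shape regularity of both elements
      (∀ i, ρ * diam (box a b) ≤ b i - a i) →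
      (∀ i, ρ * diam (box a' b') ≤ b' i - a' i) →
      -- `Q` and `Q'` are neighbors: `dist(Q, Q') ≤ c ⋅ diam Q`
      (∃ x ∈ box a b, ∃ y ∈ box a' b', dist x y ≤ c * diam (box a b)) →
      -- local quasi-uniformity: the sizes of neighboring elements are comparable
      diam (box a b) ≤ cq * diam (box a' b') →
      ∀ f : Euc d → ℝ, IsQPoly k f →
        ∀ x ∈ box a b, |f x| ≤ C * sSup ((fun y => |f y|) '' box a' b') := by
  set M : ℝ := (1 + c) * cq / ρ + 1 with hMdef
  have hM : 0 ≤ M := by positivity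
  refine ⟨(((k:ℝ)+1) * ((M+1)*((k:ℝ)+2))^k)^d, by positivity, ?_⟩
  intro a b a' b' hab hab' hreg hreg' hnb hqu f hf x hx
  -- verify the coordinatewise enlargement hypothesis for `core`
  have hcoord : ∀ i, a' i - M * (b' i - a' i) ≤ x i ∧ x i ≤ b' i + M * (b' i - a' i) := by
    intro i
    obtain ⟨y, hy, z, hz, hdyz⟩ := hnb
    have hd0 : (0:ℝ) ≤ diam (box a b) := diam_nonneg
    have hd0' : (0:ℝ) ≤ diam (box a' b') := diam_nonneg
    have hL' : 0 < b' i - a' i := by linarith [hab' i]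
    -- |x i - z i| ≤ (1+c) * diam (box a b)
    have h1 : |x i - z i| ≤ (1 + c) * diam (box a b) := by
      have hxz : dist x z ≤ dist x y + dist y z := dist_triangle x y z
      have hxy : dist x y ≤ diam (box a b) :=
        dist_le_diam_of_mem (isBounded_box a b) hx hy
      calc |x i - z i| ≤ dist x z := coord_dist_le x z i
        _ ≤ dist x y + dist y z := hxz
        _ ≤ diam (box a b) + c * diam (box a b) := add_le_add hxy hdyz
        _ = (1 + c) * diam (box a b) := by ring
    -- diam (box a b) ≤ cq * (b' i - a' i) / ρ
    have h2 : diam (box a b) ≤ cq * (b' i - a' i) / ρ := by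
      have hdi : diam (box a' b') ≤ (b' i - a' i) / ρ := by
        rw [le_div_iff₀ hρ]
        linarith [hreg' i]
      calc diam (box a b) ≤ cq * diam (box a' b') := hqu
        _ ≤ cq * ((b' i - a' i) / ρ) := by
            exact mul_le_mul_of_nonneg_left hdi hcq.le
        _ = cq * (b' i - a' i) / ρ := by ring
    have h3 : |z i - a' i| ≤ b' i - a' i := by
      have := hz i
      rw [abs_le]
      constructor <;> [linarith [this.1]; linarith [this.2]]
    have h4 : |x i - a' i| ≤ M * (b' i - a' i) := by
      have h5 : |x i - a' i| ≤ |x i - z i| + |z i - a' i| := by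
        have : x i - a' i = (x i - z i) + (z i - a' i) := by ring
        rw [this]
        exact abs_add_le _ _
      have h6 : (1 + c) * diam (box a b) ≤ (1 + c) * (cq * (b' i - a' i) / ρ) :=
        mul_le_mul_of_nonneg_left h2 (by linarith)
      have h7 : (1 + c) * (cq * (b' i - a' i) / ρ) = ((1 + c) * cq / ρ) * (b' i - a' i) := by
        ring
      rw [hMdef]
      calc |x i - a' i| ≤ |x i - z i| + |z i - a' i| := h5
        _ ≤ (1 + c) * diam (box a b) + (b' i - a' i) := add_le_add h1 h3
        _ ≤ ((1 + c) * cq / ρ) * (b' i - a' i) + (b' i - a' i) := by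
            rw [← h7]; linarith
        _ = ((1 + c) * cq / ρ + 1) * (b' i - a' i) := by ring
    rw [abs_le] at h4
    constructor <;> [linarith [h4.1]; linarith [h4.2]]
  exact core k M hM d a' b' hab' f hf x hcoord

end
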